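/- Let E be a real Banach space, let U, Ξ, F, S : ℝ → E be continuously differentiable functions with derivatives U', Ξ', F', S', and let L > 0, Δt > 0, a ∈ ℝ. Define g : ℝ → E by g(t) = (L/2)·[(U(t) − U(t−Δt)) + (Ξ(t) − Ξ(t−Δt))] + (1/2)·[(F(t) − F(t−Δt)) + (S(t) − S(t−Δt))]. Then ∫_{a}^{a+Δt} ‖g(t)‖² dt ≤ (Δt)² · ∫_{a−Δt}^{a+Δt} ( L²‖U'(s)‖² + L²‖Ξ'(s)‖² + ‖F'(s)‖² + ‖S'(s)‖² ) ds. -/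

import Mathlib

open intervalIntegral MeasureTheory Set

lemma sq_intInt_le (f : ℝ → ℝ) (hf : Continuous f) {c d : ℝ} (h : c ≤ d) :
    (∫ x in c..d, f x) ^ 2 ≤ (d - c) * ∫ x in c..d, f x ^ 2 := by
  rcases eq_or_lt_of_le h with rfl | hlt
  · simp
  · have hd : 0 < d - c := by linarith
    set I := ∫ x in c..d, f x with hI
    set J := ∫ x in c..d, f x ^ 2 with hJ
    set A := I / (d - c) with hA
    have hint : IntervalIntegrable f volume c d := hf.intervalIntegrable c d
    have hint2 : IntervalIntegrable (fun x => f x ^ 2) volume c d :=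
      (hf.pow 2).intervalIntegrable c d
    have key : 0 ≤ ∫ x in c..d, (f x - A) ^ 2 :=
      intervalIntegral.integral_nonneg h (fun x _ => sq_nonneg _)
    have expand : (∫ x in c..d, (f x - A) ^ 2) = J - 2 * A * I + A ^ 2 * (d - c) := by
      have : ∀ x, (f x - A) ^ 2 = f x ^ 2 - (2 * A) * f x + A ^ 2 := by
        intro x; ring
      simp_rw [this]
      rw [intervalIntegral.integral_add (hint2.sub (hint.const_mul _)) intervalIntegrable_const,
        intervalIntegral.integral_sub hint2 (hint.const_mul _),
        intervalIntegral.integral_const_mul, intervalIntegral.integral_const]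
      simp [hI, hJ, smul_eq_mul]; ring
    rw [expand] at key
    have : J - 2 * A * I + A ^ 2 * (d - c) = J - I ^ 2 / (d - c) := by
      rw [hA]; field_simp; ring
    rw [this] at key
    have := (div_le_iff₀ hd).mp (by linarith : I ^ 2 / (d - c) ≤ J)
    linarith

theorem stmt3 {E : Type*} [NormedAddCommGroup E] [NormedSpace ℝ E] [CompleteSpace E]
    (U Ξ F S U' Ξ' F' S' : ℝ → E)
    (hU : ∀ t, HasDerivAt U (U' t) t) (hU' : Continuous U')
    (hΞ : ∀ t, HasDerivAt Ξ (Ξ' t) t) (hΞ' : Continuous Ξ')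
    (hF : ∀ t, HasDerivAt F (F' t) t) (hF' : Continuous F')
    (hS : ∀ t, HasDerivAt S (S' t) t) (hS' : Continuous S')
    (L Δt a : ℝ) (hL : 0 < L) (hΔt : 0 < Δt)
    (g : ℝ → E)
    (hg : ∀ t, g t = (L / 2) • ((U t - U (t - Δt)) + (Ξ t - Ξ (t - Δt)))
        + ((1 : ℝ) / 2) • ((F t - F (t - Δt)) + (S t - S (t - Δt)))) :
    (∫ t in a..(a + Δt), ‖g t‖ ^ 2) ≤
      Δt ^ 2 * ∫ s in (a - Δt)..(a + Δt),
        (L ^ 2 * ‖U' s‖ ^ 2 + L ^ 2 * ‖Ξ' s‖ ^ 2 + ‖F' s‖ ^ 2 + ‖S' s‖ ^ 2) := by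
  set h : ℝ → E := fun s => L • U' s + L • Ξ' s + F' s + S' s with hh_def
  have hh_cont : Continuous h := by
    unfold h; fun_prop
  set φ : ℝ → ℝ := fun s =>
    L ^ 2 * ‖U' s‖ ^ 2 + L ^ 2 * ‖Ξ' s‖ ^ 2 + ‖F' s‖ ^ 2 + ‖S' s‖ ^ 2 with hφ_def
  have hφ_cont : Continuous φ := by unfold φ; fun_prop
  have hφ_nonneg : ∀ s, 0 ≤ φ s := fun s => by
    have := sq_nonneg ‖U' s‖; have := sq_nonneg ‖Ξ' s‖
    have := sq_nonneg ‖F' s‖; have := sq_nonneg ‖S' s‖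
    have hL2 : (0:ℝ) ≤ L ^ 2 := sq_nonneg L
    unfold φ; positivity
  set K : ℝ := ∫ s in (a - Δt)..(a + Δt), φ s with hK_def
  have hK_nonneg : 0 ≤ K :=
    intervalIntegral.integral_nonneg (by linarith) (fun s _ => hφ_nonneg s)
  -- step A : g t = (1/2) • ∫ h
  have hgA : ∀ t, g t = (2:ℝ)⁻¹ • ∫ s in (t - Δt)..t, h s := by
    intro t
    have ftc : ∀ (V V' : ℝ → E), (∀ x, HasDerivAt V (V' x) x) → Continuous V' →
        (∫ s in (t - Δt)..t, V' s) = V t - V (t - Δt) := fun V V' hV hV' =>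
      intervalIntegral.integral_eq_sub_of_hasDerivAt (fun x _ => hV x)
        (hV'.intervalIntegrable _ _)
    have hW : ∀ x, HasDerivAt (fun y => L • U y + L • Ξ y + F y + S y) (h x) x := by
      intro x
      exact ((((hU x).const_smul L).add ((hΞ x).const_smul L)).add (hF x)).add (hS x)
    have hsplit : (∫ s in (t - Δt)..t, h s)
        = (L • U t + L • Ξ t + F t + S t)
          - (L • U (t - Δt) + L • Ξ (t - Δt) + F (t - Δt) + S (t - Δt)) :=
      intervalIntegral.integral_eq_sub_of_hasDerivAt (fun x _ => hW x)
        (hh_cont.intervalIntegrable _ _)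
    rw [hg t, hsplit]
    module
  -- continuity of g
  have hg_eq : g = fun t => (L / 2) • ((U t - U (t - Δt)) + (Ξ t - Ξ (t - Δt)))
      + ((1 : ℝ) / 2) • ((F t - F (t - Δt)) + (S t - S (t - Δt))) := funext hg
  have cU : Continuous U := continuous_iff_continuousAt.mpr fun x => (hU x).continuousAt
  have cΞ : Continuous Ξ := continuous_iff_continuousAt.mpr fun x => (hΞ x).continuousAt
  have cF : Continuous F := continuous_iff_continuousAt.mpr fun x => (hF x).continuousAt
  have cS : Continuous S := continuous_iff_continuousAt.mpr fun x => (hS x).continuousAt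
  have hg_cont : Continuous g := by rw [hg_eq]; fun_prop
  -- pointwise bound
  have hpt : ∀ t ∈ Icc a (a + Δt), ‖g t‖ ^ 2 ≤ Δt * K := by
    intro t ht
    have hle : t - Δt ≤ t := by linarith
    have h1 : ‖∫ s in (t - Δt)..t, h s‖ ≤ ∫ s in (t - Δt)..t, ‖h s‖ :=
      intervalIntegral.norm_integral_le_integral_norm hle
    have h2 : (∫ s in (t - Δt)..t, ‖h s‖) ^ 2 ≤ Δt * ∫ s in (t - Δt)..t, ‖h s‖ ^ 2 := by
      have := sq_intInt_le (fun s => ‖h s‖) hh_cont.norm hle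
      simpa using this
    have h3 : (∫ s in (t - Δt)..t, ‖h s‖ ^ 2) ≤ ∫ s in (t - Δt)..t, 4 * φ s := by
      apply intervalIntegral.integral_mono_on hle
        ((hh_cont.norm.pow 2).intervalIntegrable _ _)
        ((continuous_const.mul hφ_cont).intervalIntegrable _ _)
      intro s _
      have hb : ‖h s‖ ≤ L * ‖U' s‖ + L * ‖Ξ' s‖ + ‖F' s‖ + ‖S' s‖ := by
        have e1 : ‖L • U' s‖ = L * ‖U' s‖ := by
          rw [norm_smul, Real.norm_of_nonneg hL.le]
        have e2 : ‖L • Ξ' s‖ = L * ‖Ξ' s‖ := by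
          rw [norm_smul, Real.norm_of_nonneg hL.le]
        calc ‖h s‖ ≤ ‖L • U' s + L • Ξ' s + F' s‖ + ‖S' s‖ := norm_add_le _ _
          _ ≤ ‖L • U' s + L • Ξ' s‖ + ‖F' s‖ + ‖S' s‖ := by
              have := norm_add_le (L • U' s + L • Ξ' s) (F' s); linarith
          _ ≤ ‖L • U' s‖ + ‖L • Ξ' s‖ + ‖F' s‖ + ‖S' s‖ := by
              have := norm_add_le (L • U' s) (L • Ξ' s); linarith
          _ = L * ‖U' s‖ + L * ‖Ξ' s‖ + ‖F' s‖ + ‖S' s‖ := by rw [e1, e2]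
      have hns : (0:ℝ) ≤ ‖h s‖ := norm_nonneg _
      have hφs : φ s = L ^ 2 * ‖U' s‖ ^ 2 + L ^ 2 * ‖Ξ' s‖ ^ 2 + ‖F' s‖ ^ 2 + ‖S' s‖ ^ 2 := rfl
      show ‖h s‖ ^ 2 ≤ 4 * φ s
      rw [hφs]
      nlinarith [sq_nonneg (L * ‖U' s‖ - L * ‖Ξ' s‖), sq_nonneg (L * ‖U' s‖ - ‖F' s‖),
        sq_nonneg (L * ‖U' s‖ - ‖S' s‖), sq_nonneg (L * ‖Ξ' s‖ - ‖F' s‖),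
        sq_nonneg (L * ‖Ξ' s‖ - ‖S' s‖), sq_nonneg (‖F' s‖ - ‖S' s‖),
        norm_nonneg (U' s), norm_nonneg (Ξ' s), norm_nonneg (F' s), norm_nonneg (S' s)]
    have h4 : (∫ s in (t - Δt)..t, 4 * φ s) ≤ ∫ s in (a - Δt)..(a + Δt), 4 * φ s := by
      apply intervalIntegral.integral_mono_interval (by linarith [ht.1]) hle (by linarith [ht.2])
        (Filter.Eventually.of_forall fun s => by
          have := hφ_nonneg s; show (0:ℝ) ≤ 4 * φ s; positivity)
        ((continuous_const.mul hφ_cont).intervalIntegrable _ _)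
    have h5 : (∫ s in (a - Δt)..(a + Δt), 4 * φ s) = 4 * K := by
      rw [hK_def, intervalIntegral.integral_const_mul]
    rw [hgA t]
    rw [norm_smul]
    have hA0 : (0:ℝ) ≤ ∫ s in (t - Δt)..t, ‖h s‖ :=
      intervalIntegral.integral_nonneg hle fun s _ => norm_nonneg _
    have hN0 : (0:ℝ) ≤ ‖∫ s in (t - Δt)..t, h s‖ := norm_nonneg _
    have : (∫ s in (t - Δt)..t, ‖h s‖ ^ 2) ≤ 4 * K := by linarith
    have hsq : ‖∫ s in (t - Δt)..t, h s‖ ^ 2 ≤ Δt * (4 * K) := by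
      nlinarith
    have : ‖(2:ℝ)⁻¹‖ = (2:ℝ)⁻¹ := by norm_num
    rw [this]
    nlinarith
  -- conclude
  have hgi : IntervalIntegrable (fun t => ‖g t‖ ^ 2) volume a (a + Δt) :=
    (hg_cont.norm.pow 2).intervalIntegrable _ _
  calc (∫ t in a..(a + Δt), ‖g t‖ ^ 2) ≤ ∫ _t in a..(a + Δt), Δt * K :=
        intervalIntegral.integral_mono_on (by linarith) hgi intervalIntegrable_const hpt
    _ = Δt * (Δt * K) := by
        rw [intervalIntegral.integral_const]; simp [smul_eq_mul]
    _ = Δt ^ 2 * K := by ring
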